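/- In F_2^8, a lifted MRD code of 4-subspaces with minimum rank distance 3 (e.g., the lifted Gabidulin code G_{8,4,3}) has cardinality 2^{4·(4−3+1)} = 256 and covers every line of F_2^8 disjoint from the special solid S = {0} × F_{2^4} exactly once: for every 2-subspace L of F_2^8 with L∩S = 0 there is exactly one codeword containing L. -/

import Mathlib

local notation "F" => GaloisField 2 4


open Module

/-- The underlying set of the Gabidulin codeword `G(a₀,a₁) = {(x, a₀x + a₁x²) : x ∈ F₁₆}`
inside `F_2^8 = F₁₆ × F₁₆`. -/
def gabCarrier (a₀ a₁ : GaloisField 2 4) : Set (GaloisField 2 4 × GaloisField 2 4) :=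
  {p | ∃ x : GaloisField 2 4, p = (x, a₀ * x + a₁ * x ^ 2)}

/-- A subspace of `F_2^8 = F₁₆ × F₁₆` is a codeword of the lifted Gabidulin code
`G_{8,4,3}` if its carrier is `{(x, a₀x + a₁x²) : x}` for some `a₀, a₁ ∈ F₁₆`. -/
def IsGabCodeword (U : Submodule (ZMod 2) (GaloisField 2 4 × GaloisField 2 4)) : Prop :=
  ∃ a₀ a₁ : GaloisField 2 4, (U : Set (GaloisField 2 4 × GaloisField 2 4)) =
    gabCarrier a₀ a₁

lemma gab_key {x₁ x₂ a₀ a₁ b₀ b₁ : F} (h1 : x₁ ≠ 0) (h2 : x₂ ≠ 0) (h12 : x₁ ≠ x₂)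
    (e1 : a₀ * x₁ + a₁ * x₁ ^ 2 = b₀ * x₁ + b₁ * x₁ ^ 2)
    (e2 : a₀ * x₂ + a₁ * x₂ ^ 2 = b₀ * x₂ + b₁ * x₂ ^ 2) :
    a₀ = b₀ ∧ a₁ = b₁ := by
  have F1 : (a₀ - b₀) + (a₁ - b₁) * x₁ = 0 := by
    have h : x₁ * ((a₀ - b₀) + (a₁ - b₁) * x₁) = 0 := by linear_combination e1
    rcases mul_eq_zero.mp h with h | h
    · exact absurd h h1
    · exact h
  have F2 : (a₀ - b₀) + (a₁ - b₁) * x₂ = 0 := by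
    have h : x₂ * ((a₀ - b₀) + (a₁ - b₁) * x₂) = 0 := by linear_combination e2
    rcases mul_eq_zero.mp h with h | h
    · exact absurd h h2
    · exact h
  have F3 : (a₁ - b₁) * (x₁ - x₂) = 0 := by linear_combination F1 - F2
  have h12' : x₁ - x₂ ≠ 0 := sub_ne_zero.mpr h12
  have hb : a₁ = b₁ := by
    rcases mul_eq_zero.mp F3 with h | h
    · exact sub_eq_zero.mp h
    · exact absurd h h12'
  refine ⟨?_, hb⟩
  have : a₀ - b₀ = 0 := by rw [hb] at F1; linear_combination F1
  exact sub_eq_zero.mp this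

noncomputable def gabSub (a₀ a₁ : GaloisField 2 4) :
    Submodule (ZMod 2) (GaloisField 2 4 × GaloisField 2 4) where
  carrier := gabCarrier a₀ a₁
  zero_mem' := ⟨0, by ext <;> simp⟩
  add_mem' := by
    rintro p q ⟨x, rfl⟩ ⟨y, rfl⟩
    refine ⟨x + y, ?_⟩
    have h2 : (x + y) ^ 2 = x ^ 2 + y ^ 2 := CharTwo.add_sq x y
    rw [Prod.mk_add_mk]
    refine Prod.ext rfl ?_
    simp only [h2]
    ring
  smul_mem' := by
    rintro c p ⟨x, rfl⟩
    fin_cases c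
    · exact ⟨0, by show (0 : ZMod 2) • _ = _; ext <;> simp⟩
    · refine ⟨x, ?_⟩
      show (1 : ZMod 2) • _ = _
      rw [one_smul]

lemma mem_gabSub {a₀ a₁ : F} {p : F × F} :
    p ∈ gabSub a₀ a₁ ↔ p.2 = a₀ * p.1 + a₁ * p.1 ^ 2 := by
  constructor
  · rintro ⟨x, rfl⟩; rfl
  · intro h; exact ⟨p.1, Prod.ext rfl h⟩

lemma gabSub_coe (a₀ a₁ : F) : ((gabSub a₀ a₁ : Submodule (ZMod 2) (F × F)) :
    Set (F × F)) = gabCarrier a₀ a₁ := rfl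

noncomputable instance : Fintype (GaloisField 2 4) := Fintype.ofFinite _

lemma natCard_F : Nat.card F = 16 := GaloisField.card 2 4 (by norm_num)

lemma exists_third : ∃ t : F, t ≠ 0 ∧ t ≠ 1 := by
  letI := Classical.decEq (GaloisField 2 4)
  by_contra h
  push_neg at h
  have hsub : (Finset.univ : Finset F) ⊆ {0, 1} := by
    intro t _
    rcases eq_or_ne t 0 with h0 | h0
    · simp [h0]
    · simp [h t h0]
  have hc := Finset.card_le_card hsub
  have h16 : Fintype.card F = 16 := by
    rw [← Nat.card_eq_fintype_card]; exact natCard_F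
  have : ({0, 1} : Finset F).card ≤ 2 := Finset.card_insert_le _ _ |>.trans (by simp)
  rw [Finset.card_univ, h16] at hc
  omega

lemma gab_inj : Function.Injective
    (fun ab : F × F => gabSub ab.1 ab.2) := by
  rintro ⟨a₀, a₁⟩ ⟨b₀, b₁⟩ h
  replace h : gabSub a₀ a₁ = gabSub b₀ b₁ := h
  obtain ⟨t, ht0, ht1⟩ := exists_third
  have hmem : ∀ x : F, a₀ * x + a₁ * x ^ 2 = b₀ * x + b₁ * x ^ 2 := by
    intro x
    have : (x, a₀ * x + a₁ * x ^ 2) ∈ gabSub b₀ b₁ := by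
      rw [← h]; exact ⟨x, rfl⟩
    simpa using mem_gabSub.mp this
  obtain ⟨h0, h1⟩ := gab_key (one_ne_zero) ht0 (Ne.symm ht1) (hmem 1) (hmem t)
  simp [h0, h1]

lemma natCard_submodule (W : Submodule (ZMod 2) (F × F)) :
    Nat.card ↥W = 2 ^ finrank (ZMod 2) ↥W := by
  haveI : Fintype ↥W := Fintype.ofFinite _
  rw [Nat.card_eq_fintype_card, card_eq_pow_finrank (K := ZMod 2), ZMod.card]

lemma gabSub_finrank (a₀ a₁ : F) : finrank (ZMod 2) ↥(gabSub a₀ a₁) = 4 := by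
  have hcard : Nat.card ↥(gabSub a₀ a₁) = 16 := by
    have e : F ≃ ↥(gabSub a₀ a₁) := by
      refine Equiv.ofBijective (fun x => ⟨(x, a₀ * x + a₁ * x ^ 2), ⟨x, rfl⟩⟩) ⟨?_, ?_⟩
      · intro x y hxy
        have h2 : ((x, a₀ * x + a₁ * x ^ 2) : F × F) = (y, a₀ * y + a₁ * y ^ 2) :=
          congrArg Subtype.val hxy
        exact (Prod.ext_iff.mp h2).1
      · rintro ⟨p, x, rfl⟩
        exact ⟨x, rfl⟩
    rw [← Nat.card_congr e]; exact natCard_F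
  have := natCard_submodule (gabSub a₀ a₁)
  rw [hcard] at this
  have h16 : (16 : ℕ) = 2 ^ 4 := by norm_num
  rw [h16] at this
  exact (Nat.pow_right_injective (le_refl 2) this.symm)

/-- The lifted Gabidulin code `G_{8,4,3}` in `F_2^8` has exactly `2^{4·(4-3+1)} = 256`
codewords, each of dimension 4; any two distinct codewords intersect in dimension at most 1
(subspace distance ≥ 6); and every line of `F_2^8` disjoint from the special solid
`S = {0} × F₁₆` is contained in exactly one codeword. -/
theorem stmt_19 :
    Nat.card {U : Submodule (ZMod 2) (GaloisField 2 4 × GaloisField 2 4) //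
      IsGabCodeword U} = 2 ^ (4 * (4 - 3 + 1)) ∧
    (∀ U : Submodule (ZMod 2) (GaloisField 2 4 × GaloisField 2 4), IsGabCodeword U →
      finrank (ZMod 2) ↥U = 4) ∧
    (∀ U U' : Submodule (ZMod 2) (GaloisField 2 4 × GaloisField 2 4),
      IsGabCodeword U → IsGabCodeword U' → U ≠ U' →
      finrank (ZMod 2) ↥(U ⊓ U') ≤ 1) ∧
    (∀ L : Submodule (ZMod 2) (GaloisField 2 4 × GaloisField 2 4),
      finrank (ZMod 2) ↥L = 2 →
      L ⊓ ((⊥ : Submodule (ZMod 2) (GaloisField 2 4)).prod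
        (⊤ : Submodule (ZMod 2) (GaloisField 2 4))) = ⊥ →
      ∃! U : Submodule (ZMod 2) (GaloisField 2 4 × GaloisField 2 4),
        IsGabCodeword U ∧ L ≤ U) := by
  refine ⟨?_, ?_, ?_, ?_⟩
  · -- cardinality
    have hb : Function.Bijective (fun ab : F × F =>
        (⟨gabSub ab.1 ab.2, ab.1, ab.2, rfl⟩ :
          {U : Submodule (ZMod 2) (F × F) // IsGabCodeword U})) := by
      constructor
      · intro a c h
        exact gab_inj (congrArg Subtype.val h)
      · rintro ⟨U, a₀, a₁, hU⟩
        exact ⟨(a₀, a₁), Subtype.ext (SetLike.coe_injective hU).symm⟩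
    rw [← Nat.card_congr (Equiv.ofBijective _ hb), Nat.card_prod, natCard_F]
    norm_num
  · -- dimension
    rintro U ⟨a₀, a₁, hU⟩
    have hUeq : U = gabSub a₀ a₁ := SetLike.coe_injective hU
    rw [hUeq]
    exact gabSub_finrank a₀ a₁
  · -- pairwise intersections
    rintro U U' ⟨a₀, a₁, hU⟩ ⟨b₀, b₁, hU'⟩ hne
    have hUeq : U = gabSub a₀ a₁ := SetLike.coe_injective hU
    have hU'eq : U' = gabSub b₀ b₁ := SetLike.coe_injective hU'
    subst hUeq hU'eq
    have hmemU : ∀ w : F × F, w ∈ gabSub a₀ a₁ ⊓ gabSub b₀ b₁ →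
        w.2 = a₀ * w.1 + a₁ * w.1 ^ 2 ∧ w.2 = b₀ * w.1 + b₁ * w.1 ^ 2 :=
      fun w hw => ⟨mem_gabSub.mp hw.1, mem_gabSub.mp hw.2⟩
    have hne' : ¬(a₀ = b₀ ∧ a₁ = b₁) := by
      rintro ⟨rfl, rfl⟩; exact hne rfl
    by_cases hex : ∃ w, w ∈ gabSub a₀ a₁ ⊓ gabSub b₀ b₁ ∧ (w : F × F).1 ≠ 0
    · obtain ⟨w₀, hw₀, hw₀1⟩ := hex
      have hw₀0 : w₀ ≠ 0 := by
        intro h; exact hw₀1 (by rw [h]; rfl)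
      have hle : gabSub a₀ a₁ ⊓ gabSub b₀ b₁ ≤ Submodule.span (ZMod 2) {w₀} := by
        intro w hw
        obtain ⟨hwa, hwb⟩ := hmemU w hw
        rcases eq_or_ne w.1 0 with h0 | h0
        · have : w = 0 := by
            have : w.2 = 0 := by rw [hwa, h0]; ring
            rw [Prod.ext_iff]
            simpa using ⟨h0, this⟩
          rw [this]; exact Submodule.zero_mem _
        · have h1 : w.1 = w₀.1 := by
            by_contra hne12
            obtain ⟨h₀a, h₀b⟩ := hmemU w₀ hw₀
            exact hne' (gab_key h0 hw₀1 hne12 (hwa ▸ hwb ▸ rfl)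
              (h₀a ▸ h₀b ▸ rfl))
          have h2 : w = w₀ := by
            obtain ⟨h₀a, _⟩ := hmemU w₀ hw₀
            refine Prod.ext h1 ?_
            rw [hwa, h₀a, h1]
          rw [h2]
          exact Submodule.mem_span_singleton_self w₀
      calc finrank (ZMod 2) ↥(gabSub a₀ a₁ ⊓ gabSub b₀ b₁)
          ≤ finrank (ZMod 2) ↥(Submodule.span (ZMod 2) {w₀}) := Submodule.finrank_mono hle
        _ = 1 := finrank_span_singleton hw₀0
    · push_neg at hex
      have hbot : gabSub a₀ a₁ ⊓ gabSub b₀ b₁ = ⊥ := by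
        rw [eq_bot_iff]
        intro w hw
        obtain ⟨hwa, _⟩ := hmemU w hw
        have h0 : w.1 = 0 := hex w hw
        have h2 : w.2 = 0 := by rw [hwa, h0]; ring
        have : w = 0 := by rw [Prod.ext_iff]; simpa using ⟨h0, h2⟩
        simp [Submodule.mem_bot, this]
      rw [hbot]
      simp
  · -- exact cover of lines disjoint from the special solid
    intro L hL2 hdisj
    have hfst : ∀ w : F × F, w ∈ L → w.1 = 0 → w = 0 := by
      intro w hw h1
      have hmem : w ∈ L ⊓ ((⊥ : Submodule (ZMod 2) F).prod (⊤ : Submodule (ZMod 2) F)) :=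
        ⟨hw, Submodule.mem_prod.mpr ⟨h1, trivial⟩⟩
      rw [hdisj] at hmem
      exact hmem
    obtain ⟨u, v, hu, hv, hx₁, hx₂, hx₁₂, hrep⟩ :
        ∃ u v : F × F, u ∈ L ∧ v ∈ L ∧ u.1 ≠ 0 ∧ v.1 ≠ 0 ∧ u.1 ≠ v.1 ∧
          ∀ w ∈ L, ∃ c d : ZMod 2, w = c • u + d • v := by
      haveI : Module.Finite (ZMod 2) ↥L := inferInstance
      let b := Module.finBasisOfFinrankEq (ZMod 2) ↥L hL2
      have hLI : LinearIndependent (ZMod 2) (fun i : Fin 2 => ((b i : ↥L) : F × F)) :=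
        b.linearIndependent.map' L.subtype (Submodule.ker_subtype L)
      refine ⟨(b 0 : ↥L), (b 1 : ↥L), (b 0).2, (b 1).2, ?_, ?_, ?_, ?_⟩
      · intro h
        exact hLI.ne_zero 0 (hfst _ (b 0).2 h)
      · intro h
        exact hLI.ne_zero 1 (hfst _ (b 1).2 h)
      · intro h
        have hsum : ((b 0 : ↥L) : F × F) + ((b 1 : ↥L) : F × F) = 0 := by
          apply hfst _ (Submodule.add_mem L (b 0).2 (b 1).2)
          rw [Prod.fst_add, h]
          exact CharTwo.add_self_eq_zero _
        have := Fintype.linearIndependent_iff.mp hLI ![1, 1]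
          (by simpa [Fin.sum_univ_two] using hsum) 0
        exact one_ne_zero this
      · intro w hw
        refine ⟨b.repr ⟨w, hw⟩ 0, b.repr ⟨w, hw⟩ 1, ?_⟩
        have h := congrArg (Subtype.val : ↥L → F × F) (b.sum_repr ⟨w, hw⟩)
        rw [Fin.sum_univ_two, Submodule.coe_add, Submodule.coe_smul, Submodule.coe_smul] at h
        exact h.symm
    have hd : u.1 - v.1 ≠ 0 := sub_ne_zero.mpr hx₁₂
    obtain ⟨a₀, a₁, heu, hev⟩ :
        ∃ a₀ a₁ : F, u.2 = a₀ * u.1 + a₁ * u.1 ^ 2 ∧ v.2 = a₀ * v.1 + a₁ * v.1 ^ 2 := by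
      refine ⟨u.2 / u.1 - ((u.2 * v.1 - v.2 * u.1) / (u.1 * v.1 * (u.1 - v.1))) * u.1,
        (u.2 * v.1 - v.2 * u.1) / (u.1 * v.1 * (u.1 - v.1)), ?_, ?_⟩ <;>
      · have hD : u.1 * v.1 * (u.1 - v.1) ≠ 0 := mul_ne_zero (mul_ne_zero hx₁ hx₂) hd
        field_simp [hx₁, hx₂, hD]
        ring
    refine ⟨gabSub a₀ a₁, ⟨⟨a₀, a₁, rfl⟩, ?_⟩, ?_⟩
    · intro w hw
      obtain ⟨c, d, rfl⟩ := hrep w hw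
      exact Submodule.add_mem _ (Submodule.smul_mem _ c (mem_gabSub.mpr heu))
        (Submodule.smul_mem _ d (mem_gabSub.mpr hev))
    · rintro U' ⟨⟨c₀, c₁, hc⟩, hLU'⟩
      have hU'eq : U' = gabSub c₀ c₁ := SetLike.coe_injective hc
      have h1 : u.2 = c₀ * u.1 + c₁ * u.1 ^ 2 := mem_gabSub.mp (hU'eq ▸ hLU' hu)
      have h2 : v.2 = c₀ * v.1 + c₁ * v.1 ^ 2 := mem_gabSub.mp (hU'eq ▸ hLU' hv)
      have eA : c₀ * u.1 + c₁ * u.1 ^ 2 = a₀ * u.1 + a₁ * u.1 ^ 2 := by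
        rw [← h1]; exact heu
      have eB : c₀ * v.1 + c₁ * v.1 ^ 2 = a₀ * v.1 + a₁ * v.1 ^ 2 := by
        rw [← h2]; exact hev
      obtain ⟨e0, e1⟩ := gab_key hx₁ hx₂ hx₁₂ eA eB
      rw [hU'eq, e0, e1]
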